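/- Let p : E → X and q : F → X be local homeomorphisms of topological spaces, and let 𝒮(p) and 𝒮(q) be their sheaves of sections. Then the assignment sending a continuous map f : E → F with q ∘ f = p to the morphism of sheaves 𝒮(p) → 𝒮(q) given on each open U by post-composition s ↦ f ∘ s is a bijection between the set of continuous maps f : E → F over X and the set of morphisms of presheaves 𝒮(p) → 𝒮(q). (This is the fully faithful part of the equivalence between étale spaces over X and sheaves on X.) -/

import Mathlib

/-!
STATEMENT 6: For local homeomorphisms `p : E → X` and `q : F → X`, post-composition
gives a bijection between continuous maps `f : E → F` over `X` and morphisms of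
presheaves `𝒮(p) → 𝒮(q)` between the sheaves of sections.  (Bijectivity is stated
in the equivalent form: every morphism of presheaves `Φ : 𝒮(p) → 𝒮(q)` is induced by
post-composition with a unique continuous `f : E → F` over `X`.)
-/

open TopologicalSpace

/-- The set of continuous sections of `p : E → X` over an open set `U ⊆ X`. -/
def Sec {E X : Type} [TopologicalSpace E] [TopologicalSpace X]
    (p : E → X) (U : Opens X) : Type :=
  { s : ↥U → E // Continuous s ∧ ∀ x : ↥U, p (s x) = ↑x }

/-- Restriction of sections along an inclusion of open sets. -/
def Sec.restrict {E X : Type} [TopologicalSpace E] [TopologicalSpace X]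
    (p : E → X) {U V : Opens X} (h : V ≤ U) (s : Sec p U) : Sec p V :=
  ⟨fun x => s.1 ⟨x.1, h x.2⟩,
    s.2.1.comp (Continuous.subtype_mk continuous_subtype_val fun x => h x.2),
    fun x => s.2.2 ⟨x.1, h x.2⟩⟩

/-- Any two sections agreeing at a point get sent by `Φ` to sections agreeing there. -/
theorem key_agree {E F X : Type} [TopologicalSpace E] [TopologicalSpace F] [TopologicalSpace X]
    (p : E → X) (q : F → X) (hp : IsLocalHomeomorph p)
    (Φ : ∀ U : Opens X, Sec p U → Sec q U)
    (hΦ : ∀ (U V : Opens X) (h : V ≤ U) (s : Sec p U),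
      Φ V (Sec.restrict p h s) = Sec.restrict q h (Φ U s))
    {U V : Opens X} (s : Sec p U) (t : Sec p V) (x : X) (hU : x ∈ U) (hV : x ∈ V)
    (hst : s.1 ⟨x, hU⟩ = t.1 ⟨x, hV⟩) :
    (Φ U s).1 ⟨x, hU⟩ = (Φ V t).1 ⟨x, hV⟩ := by
  obtain ⟨φ, heφ, hpφ⟩ := hp (s.1 ⟨x, hU⟩)
  set W : Opens X := ⟨Subtype.val '' (s.1 ⁻¹' φ.source) ∩ Subtype.val '' (t.1 ⁻¹' φ.source),
    (U.2.isOpenMap_subtype_val _ (φ.open_source.preimage s.2.1)).inter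
      (V.2.isOpenMap_subtype_val _ (φ.open_source.preimage t.2.1))⟩ with hW
  have hWU : W ≤ U := fun y hy => by
    obtain ⟨⟨z, _, rfl⟩, _⟩ := hy; exact z.2
  have hWV : W ≤ V := fun y hy => by
    obtain ⟨_, ⟨z, _, rfl⟩⟩ := hy; exact z.2
  have hxW : x ∈ W := ⟨⟨⟨x, hU⟩, heφ, rfl⟩, ⟨⟨x, hV⟩, show t.1 ⟨x, hV⟩ ∈ φ.source by rw [← hst]; exact heφ, rfl⟩⟩
  have hres : Sec.restrict p hWU s = Sec.restrict p hWV t := by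
    apply Subtype.ext
    funext y
    obtain ⟨⟨z1, hz1, hz1v⟩, ⟨z2, hz2, hz2v⟩⟩ := y.2
    have e1 : (⟨y.1, hWU y.2⟩ : ↥U) = z1 := Subtype.ext hz1v.symm
    have e2 : (⟨y.1, hWV y.2⟩ : ↥V) = z2 := Subtype.ext hz2v.symm
    show s.1 ⟨y.1, hWU y.2⟩ = t.1 ⟨y.1, hWV y.2⟩
    rw [e1, e2]
    apply φ.injOn hz1 hz2
    have a1 := s.2.2 z1
    have a2 := t.2.2 z2
    simp only [← hpφ, a1, a2, hz1v, hz2v]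
  have h1 := congrArg (fun σ : Sec q W => σ.1 ⟨x, hxW⟩) (hΦ U W hWU s)
  have h2 := congrArg (fun σ : Sec q W => σ.1 ⟨x, hxW⟩) (hΦ V W hWV t)
  change (Φ W (Sec.restrict p hWU s)).1 ⟨x, hxW⟩ = (Sec.restrict q hWU (Φ U s)).1 ⟨x, hxW⟩ at h1
  change (Φ W (Sec.restrict p hWV t)).1 ⟨x, hxW⟩ = (Sec.restrict q hWV (Φ V t)).1 ⟨x, hxW⟩ at h2
  have : (Φ W (Sec.restrict p hWU s)).1 ⟨x, hxW⟩ = (Φ W (Sec.restrict p hWV t)).1 ⟨x, hxW⟩ := by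
    rw [hres]
  rw [h1, h2] at this
  exact this

theorem etale_spaces_to_sheaves_fully_faithful
    {E F X : Type} [TopologicalSpace E] [TopologicalSpace F] [TopologicalSpace X]
    (p : E → X) (q : F → X) (hp : IsLocalHomeomorph p) (hq : IsLocalHomeomorph q)
    (Φ : ∀ U : Opens X, Sec p U → Sec q U)
    (hΦ : ∀ (U V : Opens X) (h : V ≤ U) (s : Sec p U),
      Φ V (Sec.restrict p h s) = Sec.restrict q h (Φ U s)) :
    ∃! f : { f : E → F // Continuous f ∧ ∀ e : E, q (f e) = p e },
      ∀ (U : Opens X) (s : Sec p U) (x : ↥U), (Φ U s).1 x = f.1 (s.1 x) := by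
  -- local sections through each point
  have sec : ∀ e : E, ∃ (U : Opens X) (s : Sec p U) (he : p e ∈ U), s.1 ⟨p e, he⟩ = e := by
    intro e
    obtain ⟨φ, heφ, hpφ⟩ := hp e
    refine ⟨⟨φ.target, φ.open_target⟩, ⟨fun x => φ.symm x.1,
      φ.continuousOn_symm.restrict, fun x => by rw [hpφ]; exact φ.right_inv x.2⟩, ?_, ?_⟩
    · show p e ∈ φ.target
      rw [hpφ]; exact φ.map_source heφ
    · show φ.symm (p e) = e
      rw [hpφ]; exact φ.left_inv heφ
  choose U s hmem hsec using sec
  set f0 : E → F := fun e => (Φ (U e) (s e)).1 ⟨p e, hmem e⟩ with hf0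
  -- well-definedness / main property
  have main : ∀ (V : Opens X) (t : Sec p V) (x : ↥V), (Φ V t).1 x = f0 (t.1 x) := by
    intro V t x
    set e := t.1 x with he
    have hVe : p e ∈ V := by rw [t.2.2 x]; exact x.2
    have hx : (⟨p e, hVe⟩ : ↥V) = x := Subtype.ext (t.2.2 x)
    have := key_agree p q hp Φ hΦ (s e) t (p e) (hmem e) hVe
      (by rw [hsec e, hx, he])
    rw [hx] at this
    exact this.symm
  -- continuity of f0
  have hcont : Continuous f0 := by
    rw [continuous_iff_continuousAt]
    intro e
    obtain ⟨φ, heφ, hpφ⟩ := hp e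
    set U' : Opens X := ⟨φ.target, φ.open_target⟩ with hU'
    set s' : Sec p U' := ⟨fun x => φ.symm x.1,
      φ.continuousOn_symm.restrict, fun x => by rw [hpφ]; exact φ.right_inv x.2⟩ with hs'
    have hmem' : ∀ e' ∈ φ.source, p e' ∈ U' := fun e' h => by
      show p e' ∈ φ.target; rw [hpφ]; exact φ.map_source h
    have agree : ∀ e' (h : e' ∈ φ.source), f0 e' = (Φ U' s').1 ⟨p e', hmem' e' h⟩ := by
      intro e' h
      have : s'.1 ⟨p e', hmem' e' h⟩ = e' := by
        show φ.symm (p e') = e'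
        rw [hpφ]; exact φ.left_inv h
      have := main U' s' ⟨p e', hmem' e' h⟩
      rw [‹s'.1 ⟨p e', hmem' e' h⟩ = e'›] at this
      exact this.symm
    have hco : ContinuousOn f0 φ.source := by
      rw [continuousOn_iff_continuous_restrict]
      have : Set.restrict φ.source f0 =
          (fun y : ↥U' => (Φ U' s').1 y) ∘ (fun e' : φ.source => (⟨p e'.1, hmem' e'.1 e'.2⟩ : ↥U')) := by
        funext e'
        exact agree e'.1 e'.2
      rw [show φ.source.domRestrict f0 = _ from this]
      exact (Φ U' s').2.1.comp
        ((hp.continuous.comp continuous_subtype_val).subtype_mk _)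
    exact hco.continuousAt (φ.open_source.mem_nhds heφ)
  have hq0 : ∀ e : E, q (f0 e) = p e := fun e => (Φ (U e) (s e)).2.2 ⟨p e, hmem e⟩
  refine ⟨⟨f0, hcont, hq0⟩, fun V t x => main V t x, ?_⟩
  rintro ⟨g, hgc, hgq⟩ hg
  apply Subtype.ext
  funext e
  show g e = f0 e
  have := hg (U e) (s e) ⟨p e, hmem e⟩
  rw [hsec e] at this
  exact this.symm
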